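/- For every n ≥ 1, the map ω is a bijection from the set of permutations of length n in Av(132, 312) onto the set of words of length n−1 over the alphabet {a, b}; moreover, for all permutations σ, π ∈ Av(132, 312), σ is contained in π if and only if σ^ω is a subword (not necessarily contiguous subsequence) of π^ω. -/

import Mathlib

/-- A permutation of length `n ≥ 1` in one-line notation: a nonempty list of
natural numbers that is a rearrangement of `1, …, n` where `n` is its length. -/
def IsPermList (l : List ℕ) : Prop := l ≠ [] ∧ l.Perm (List.range' 1 l.length)

instance (l : List ℕ) : Decidable (IsPermList l) :=
  inferInstanceAs (Decidable (l ≠ [] ∧ l.Perm (List.range' 1 l.length)))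

/-- The type of all (finite, nonempty) permutations. -/
abbrev Permu := {l : List ℕ // IsPermList l}

/-- Helper to construct explicit permutations. -/
def p (l : List ℕ) (h : IsPermList l := by decide) : Permu := ⟨l, h⟩

/-- Pattern containment: `σ` is contained in `τ` when some (not necessarily
contiguous) subsequence of `τ` is order isomorphic to `σ`. -/
def Contains (σ τ : Permu) : Prop :=
  ∃ u : List ℕ, u.Sublist τ.val ∧ u.length = σ.val.length ∧
    ∀ i j : ℕ, i < u.length → j < u.length →
      (u.getD i 0 < u.getD j 0 ↔ σ.val.getD i 0 < σ.val.getD j 0)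

/-- A pattern class: a set of permutations closed downwards under containment. -/
def IsPatternClass (A : Set Permu) : Prop :=
  ∀ σ τ : Permu, τ ∈ A → Contains σ τ → σ ∈ A

/-- `Av B` is the set of permutations containing no member of the set `B`. -/
def Av (B : Set Permu) : Set Permu := {π | ∀ β ∈ B, ¬ Contains β π}

/-- An isomorphism of pattern classes is a bijection which preserves and
reflects containment. -/
def IsIso {A B : Set Permu} (f : ↥A → ↥B) : Prop :=
  Function.Bijective f ∧
  ∀ σ τ : ↥A, Contains σ.val τ.val ↔ Contains (f σ).val (f τ).val

/-- The shadow of `τ`: the permutations of length one less that are contained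
in `τ`. -/
def shadow (τ : Permu) : Set Permu :=
  {σ : Permu | σ.val.length + 1 = τ.val.length ∧ Contains σ τ}
/-- The wedge class Av(132, 312). -/
def V : Set Permu := Av {p [1,3,2], p [3,1,2]}

/-- The map ω: for π of length n, the word c₂…cₙ over {a,b} where cᵢ = a
(encoded as ) iff π(i) > π(1), and cᵢ = b (encoded ) otherwise. -/
def omegaMap (l : List ℕ) : List Bool :=
  match l with
  | [] => []
  | x :: xs => xs.map (fun y => decide (x < y))

/-! ### auxiliary -/

def WP (l : List ℕ) : Prop :=
  ∀ i j : ℕ, i < j → j < l.length → (l.getD i 0 < l.getD j 0 ↔ l.getD 0 0 < l.getD j 0)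

lemma permlist_nodup {l : List ℕ} (h : IsPermList l) : l.Nodup :=
  (h.2.nodup_iff).2 (List.nodup_range' (s := 1) (n := l.length))

lemma triple_sublist (l : List ℕ) {i j k : ℕ} (hij : i < j) (hjk : j < k)
    (hk : k < l.length) : [l.getD i 0, l.getD j 0, l.getD k 0].Sublist l := by
  have hi : i < l.length := by omega
  have hj : j < l.length := by omega
  rw [List.getD_eq_getElem _ _ hi, List.getD_eq_getElem _ _ hj, List.getD_eq_getElem _ _ hk]
  have h1 : [l[k]].Sublist (l.drop (j+1)) := by
    rw [List.singleton_sublist]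
    have : (l.drop (j+1))[k - (j+1)]'(by simp; omega) = l[k] := by
      rw [List.getElem_drop]; congr 1; omega
    exact this ▸ List.getElem_mem _
  have h2 : (l[j] :: [l[k]]).Sublist (l.drop j) := by
    rw [← List.getElem_cons_drop hj]
    exact h1.cons₂ _
  have h3 : (l[i] :: l[j] :: [l[k]]).Sublist (l.drop i) := by
    rw [← List.getElem_cons_drop hi]
    refine List.Sublist.cons₂ _ (h2.trans ?_)
    have : l.drop j = (l.drop (i+1)).drop (j - (i+1)) := by rw [List.drop_drop]; congr 1; omega
    exact this ▸ List.drop_sublist _ _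
  exact h3.trans (List.drop_sublist _ _)

lemma wp_sub3 {l u : List ℕ} (hw : WP l) (hs : u.Sublist l) (h3 : u.length = 3) :
    (u.getD 1 0 < u.getD 2 0 ↔ u.getD 0 0 < u.getD 2 0) := by
  obtain ⟨f, hf⟩ := List.sublist_iff_exists_fin_orderEmbedding_get_eq.1 hs
  have i0 : 0 < u.length := by omega
  have i1 : 1 < u.length := by omega
  have i2 : 2 < u.length := by omega
  have l01 : (f ⟨0, i0⟩ : ℕ) < (f ⟨1, i1⟩ : ℕ) := f.strictMono (by simp [Fin.lt_def])
  have l12 : (f ⟨1, i1⟩ : ℕ) < (f ⟨2, i2⟩ : ℕ) := f.strictMono (by simp [Fin.lt_def])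
  have e0 : u.getD 0 0 = l.getD (f ⟨0, i0⟩) 0 := by
    rw [List.getD_eq_getElem _ _ i0, List.getD_eq_getElem _ _ (f ⟨0, i0⟩).isLt]
    simpa using hf ⟨0, i0⟩
  have e1 : u.getD 1 0 = l.getD (f ⟨1, i1⟩) 0 := by
    rw [List.getD_eq_getElem _ _ i1, List.getD_eq_getElem _ _ (f ⟨1, i1⟩).isLt]
    simpa using hf ⟨1, i1⟩
  have e2 : u.getD 2 0 = l.getD (f ⟨2, i2⟩) 0 := by
    rw [List.getD_eq_getElem _ _ i2, List.getD_eq_getElem _ _ (f ⟨2, i2⟩).isLt]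
    simpa using hf ⟨2, i2⟩
  rw [e0, e1, e2, hw _ _ l12 (f ⟨2, i2⟩).isLt, hw _ _ (l01.trans l12) (f ⟨2, i2⟩).isLt]

lemma mem_V_of_WP {π : Permu} (hw : WP π.val) : π ∈ V := by
  intro β hβ hc
  obtain ⟨u, hsub, hlen, hiff⟩ := hc
  rcases hβ with hβ | hβ <;> subst hβ
  · have h3 : u.length = 3 := hlen
    have k12 : ¬ (u.getD 1 0 < u.getD 2 0) :=
      fun hlt => absurd ((hiff 1 2 (by omega) (by omega)).1 hlt) (by decide)
    have k02 : u.getD 0 0 < u.getD 2 0 :=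
      (hiff 0 2 (by omega) (by omega)).2 (by decide)
    exact k12 ((wp_sub3 hw hsub h3).2 k02)
  · have h3 : u.length = 3 := hlen
    have k12 : u.getD 1 0 < u.getD 2 0 :=
      (hiff 1 2 (by omega) (by omega)).2 (by decide)
    have k02 : ¬ (u.getD 0 0 < u.getD 2 0) :=
      fun hlt => absurd ((hiff 0 2 (by omega) (by omega)).1 hlt) (by decide)
    exact k02 ((wp_sub3 hw hsub h3).1 k12)

lemma WP_of_mem_V {π : Permu} (h : π ∈ V) : WP π.val := by
  intro i j hij hj
  by_contra hcon
  have hnd : π.val.Nodup := permlist_nodup π.2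
  have hi0 : 0 < i := by
    rcases Nat.eq_zero_or_pos i with h0 | h0
    · exact absurd (h0 ▸ Iff.rfl) hcon
    · exact h0
  have hi : i < π.val.length := by omega
  have hsub := triple_sublist π.val hi0 hij hj
  set a := π.val.getD 0 0 with hadef
  set x := π.val.getD i 0 with hxdef
  set y := π.val.getD j 0 with hydef
  have hne_ay : a ≠ y := by
    rw [hadef, hydef, List.getD_eq_getElem _ _ (by omega : 0 < π.val.length),
      List.getD_eq_getElem _ _ hj]
    exact fun heq => absurd (hnd.getElem_inj_iff.mp heq) (by omega)
  have hne_xy : x ≠ y := by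
    rw [hxdef, hydef, List.getD_eq_getElem _ _ hi, List.getD_eq_getElem _ _ hj]
    exact fun heq => absurd (hnd.getElem_inj_iff.mp heq) (by omega)
  by_cases hxy : x < y
  · have hya : y < a := by omega
    refine h (p [3,1,2]) (Or.inr rfl) ⟨[a, x, y], hsub, rfl, ?_⟩
    intro c b hc hb
    simp only [List.length_cons, List.length_nil] at hc hb
    interval_cases c <;> interval_cases b <;> simp [p, List.getD] <;> omega
  · have hay : a < y := by omega
    have hyx : y < x := by omega
    refine h (p [1,3,2]) (Or.inl rfl) ⟨[a, x, y], hsub, rfl, ?_⟩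
    intro c b hc hb
    simp only [List.length_cons, List.length_nil] at hc hb
    interval_cases c <;> interval_cases b <;> simp [p, List.getD] <;> omega

/-! ### toPerm -/

def shift (x v : ℕ) : ℕ := if x ≤ v then v + 1 else v

def pstep (c : Bool) (l : List ℕ) : List ℕ :=
  (if c then l.headD 0 else l.headD 0 + 1) :: l.map (shift (if c then l.headD 0 else l.headD 0 + 1))

def toPerm : List Bool → List ℕ
  | [] => [1]
  | c :: w => pstep c (toPerm w)

lemma shift_lt {x v w : ℕ} : shift x v < shift x w ↔ v < w := by
  unfold shift; split_ifs <;> omega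

lemma key_shift {h v : ℕ} (c : Bool) (hne : v ≠ h) :
    ((if c then h else h + 1) < shift (if c then h else h + 1) v ↔ h < v) := by
  unfold shift; cases c <;> simp only [if_true, if_false, Bool.false_eq_true] <;>
    split_ifs <;> omega

lemma key_shift_head {h : ℕ} (c : Bool) :
    decide ((if c then h else h + 1) < shift (if c then h else h + 1) h) = c := by
  unfold shift; cases c <;> simp

lemma toPerm_ne_nil (w : List Bool) : toPerm w ≠ [] := by
  cases w <;> simp [toPerm, pstep]

lemma toPerm_length (w : List Bool) : (toPerm w).length = w.length + 1 := by
  induction w with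
  | nil => rfl
  | cons c w ih => simp [toPerm, pstep, ih]

lemma insert_perm {l : List ℕ} {n x : ℕ} (hp : l.Perm (List.range' 1 n)) (hx1 : 1 ≤ x)
    (hxn : x ≤ n + 1) : (x :: l.map (shift x)).Perm (List.range' 1 (n + 1)) := by
  have h1 : (l.map (shift x)).Perm ((List.range' 1 n).map (shift x)) := hp.map _
  have hsplit : List.range' 1 n = List.range' 1 (x - 1) ++ List.range' x (n + 1 - x) := by
    have h := List.range'_append (s := 1) (m := x - 1) (n := n + 1 - x) (step := 1)
    rw [show 1 + 1 * (x - 1) = x by omega, show x - 1 + (n + 1 - x) = n by omega] at h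
    exact h.symm
  have hmap : (List.range' 1 n).map (shift x)
      = List.range' 1 (x - 1) ++ List.range' (x + 1) (n + 1 - x) := by
    rw [hsplit, List.map_append]
    congr 1
    · rw [List.map_congr_left (g := id), List.map_id]
      intro a ha
      rw [List.mem_range'_1] at ha
      unfold shift; rw [if_neg (by omega)]; rfl
    · rw [List.map_congr_left (g := fun y => 1 + y)]
      · rw [List.map_add_range', Nat.add_comm]
      · intro a ha
        rw [List.mem_range'_1] at ha
        unfold shift; rw [if_pos (by omega)]; omega
  have htgt : List.range' 1 (n + 1)
      = List.range' 1 (x - 1) ++ x :: List.range' (x + 1) (n + 1 - x) := by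
    have h := List.range'_append (s := 1) (m := x - 1) (n := n + 2 - x) (step := 1)
    rw [show 1 + 1 * (x - 1) = x by omega, show x - 1 + (n + 2 - x) = n + 1 by omega] at h
    rw [← h, show n + 2 - x = (n + 1 - x) + 1 by omega, List.range'_succ]
  rw [htgt]
  exact ((h1.trans (hmap ▸ List.Perm.refl _)).cons x).trans List.perm_middle.symm

lemma toPerm_isPermList (w : List Bool) : IsPermList (toPerm w) := by
  refine ⟨toPerm_ne_nil w, ?_⟩
  rw [toPerm_length]
  induction w with
  | nil => simp [toPerm]
  | cons c w ih =>
    have hne := toPerm_ne_nil w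
    have hmem : (toPerm w).headD 0 ∈ toPerm w := by
      cases hl : toPerm w with
      | nil => exact absurd hl hne
      | cons a t => simp
    have hbd : 1 ≤ (toPerm w).headD 0 ∧ (toPerm w).headD 0 < 1 + (w.length + 1) := by
      have := (ih.mem_iff).1 hmem
      rwa [List.mem_range'_1] at this
    have key : ∀ x, 1 ≤ x → x ≤ (w.length + 1) + 1 →
        (x :: (toPerm w).map (shift x)).Perm (List.range' 1 (w.length + 1 + 1)) :=
      fun x h1 h2 => insert_perm ih h1 h2
    show (pstep c (toPerm w)).Perm (List.range' 1 (w.length + 1 + 1))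
    unfold pstep
    have hxb : 1 ≤ (if c = true then (toPerm w).headD 0 else (toPerm w).headD 0 + 1) ∧
        (if c = true then (toPerm w).headD 0 else (toPerm w).headD 0 + 1) ≤ w.length + 1 + 1 := by
      cases c <;> simp only [if_true, if_false, Bool.false_eq_true] <;> omega
    exact key _ hxb.1 hxb.2

lemma toPerm_nodup (w : List Bool) : (toPerm w).Nodup := permlist_nodup (toPerm_isPermList w)

lemma getD_zero_headD (l : List ℕ) (h : l ≠ []) : l.getD 0 0 = l.headD 0 := by
  cases l <;> simp_all

lemma toPerm_WP (w : List Bool) : WP (toPerm w) := by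
  induction w with
  | nil =>
    intro i j hij hj
    simp [toPerm] at hj
    omega
  | cons c w ih =>
    intro i j hij hj
    rcases i with _ | i
    · rfl
    rcases j with _ | j
    · omega
    have hj' : j < (toPerm w).length := by
      rw [toPerm_length]
      simpa [toPerm, pstep, toPerm_length] using hj
    have hi' : i < (toPerm w).length := by omega
    have hj1 : 1 ≤ j := by omega
    show ((pstep c (toPerm w)).getD (i+1) 0 < (pstep c (toPerm w)).getD (j+1) 0
        ↔ (pstep c (toPerm w)).getD 0 0 < (pstep c (toPerm w)).getD (j+1) 0)
    unfold pstep
    simp only [List.getD_cons_succ, List.getD_cons_zero]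
    have em : ∀ k, k < (toPerm w).length →
        ((toPerm w).map (shift (if c then (toPerm w).headD 0 else (toPerm w).headD 0 + 1))).getD k 0
        = shift (if c then (toPerm w).headD 0 else (toPerm w).headD 0 + 1) ((toPerm w).getD k 0) := by
      intro k hk
      rw [List.getD_eq_getElem _ _ (by simpa using hk), List.getD_eq_getElem _ _ hk, List.getElem_map]
    rw [em i hi', em j hj', shift_lt]
    have hne : (toPerm w).getD j 0 ≠ (toPerm w).headD 0 := by
      rw [← getD_zero_headD _ (toPerm_ne_nil w), List.getD_eq_getElem _ _ hj',
        List.getD_eq_getElem _ _ (by omega : 0 < (toPerm w).length)]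
      exact fun heq => absurd ((toPerm_nodup w).getElem_inj_iff.mp heq) (by omega)
    rw [key_shift c hne, ← getD_zero_headD _ (toPerm_ne_nil w)]
    exact ih i j (by omega) hj'

lemma omegaMap_toPerm (w : List Bool) : omegaMap (toPerm w) = w := by
  induction w with
  | nil => rfl
  | cons c w ih =>
    have hne := toPerm_ne_nil w
    have hstruct : toPerm w = (toPerm w).headD 0 :: (toPerm w).tail := by
      cases hl : toPerm w with
      | nil => exact absurd hl hne
      | cons a t => rfl
    set h := (toPerm w).headD 0 with hh
    set x := if c then h else h + 1 with hx
    show omegaMap (pstep c (toPerm w)) = c :: w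
    unfold pstep
    rw [← hh, ← hx]
    rw [hstruct]
    show ((shift x h) :: ((toPerm w).tail.map (shift x))).map (fun y => decide (x < y)) = c :: w
    rw [List.map_cons, List.map_map]
    congr 1
    · rw [hx]; exact key_shift_head c
    · have hnd : (toPerm w).Nodup := toPerm_nodup w
      rw [hstruct, List.nodup_cons] at hnd
      have : ∀ v ∈ (toPerm w).tail,
          ((fun y => decide (x < y)) ∘ shift x) v = decide (h < v) := by
        intro v hv
        have hvne : v ≠ h := fun he => hnd.1 (he ▸ hv)
        simp only [Function.comp_apply]
        rw [hx]
        simp [key_shift c hvne]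
      rw [List.map_congr_left this]
      have : omegaMap (toPerm w) = (toPerm w).tail.map (fun v => decide (h < v)) := by
        rw [hstruct]; rfl
      rw [← this, ih]

/-! ### injectivity -/

lemma omegaMap_length (l : List ℕ) : (omegaMap l).length = l.length - 1 := by
  cases l <;> simp [omegaMap]

lemma omega_getD {l : List ℕ} (hl : l ≠ []) {j : ℕ} (h1 : 1 ≤ j) (hj : j < l.length) :
    (omegaMap l).getD (j - 1) false = decide (l.getD 0 0 < l.getD j 0) := by
  cases l with
  | nil => exact absurd rfl hl
  | cons a t =>
    obtain ⟨k, rfl⟩ : ∃ k, j = k + 1 := ⟨j - 1, by omega⟩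
    have hk : k < t.length := by simpa using hj
    show (t.map (fun y => decide (a < y))).getD k false = _
    rw [List.getD_eq_getElem _ _ (by simpa using hk), List.getElem_map,
      List.getD_cons_zero, List.getD_cons_succ, List.getD_eq_getElem _ _ hk]

lemma getD_ne {l : List ℕ} (hnd : l.Nodup) {i j : ℕ} (hi : i < l.length) (hj : j < l.length)
    (hne : i ≠ j) : l.getD i 0 ≠ l.getD j 0 := by
  rw [List.getD_eq_getElem _ _ hi, List.getD_eq_getElem _ _ hj]
  exact fun heq => hne (hnd.getElem_inj_iff.mp heq)

lemma decide_lt_eq {l : List ℕ} (h : IsPermList l) (hw : WP l) {i j : ℕ} (hi : i < l.length)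
    (hj : j < l.length) (hne : i ≠ j) :
    decide (l.getD i 0 < l.getD j 0) =
      (if i < j then (omegaMap l).getD (j - 1) false else !((omegaMap l).getD (i - 1) false)) := by
  have hnd := permlist_nodup h
  by_cases hij : i < j
  · rw [if_pos hij, omega_getD h.1 (by omega) hj, decide_eq_decide]
    exact hw i j hij hj
  · have hji : j < i := by omega
    rw [if_neg hij, omega_getD h.1 (by omega) hi]
    have hvne : l.getD i 0 ≠ l.getD j 0 := getD_ne hnd hi hj hne
    have key : l.getD 0 0 < l.getD i 0 ↔ l.getD j 0 < l.getD i 0 := (hw j i hji hi).symm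
    by_cases hlt : l.getD i 0 < l.getD j 0
    · have h2 : ¬ (l.getD 0 0 < l.getD i 0) := by rw [key]; omega
      rw [decide_eq_true hlt, decide_eq_false h2]; rfl
    · have h2 : l.getD 0 0 < l.getD i 0 := by rw [key]; omega
      rw [decide_eq_false hlt, decide_eq_true h2]; rfl

lemma rank_formula {l : List ℕ} (h : IsPermList l) {j : ℕ} (hj : j < l.length) :
    l.getD j 0 = 1 + ((List.range l.length).filter
      (fun i => decide (l.getD i 0 < l.getD j 0))).length := by
  set v := l.getD j 0 with hv
  set q : ℕ → Bool := fun u => decide (u < v) with hq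
  have hvmem : v ∈ l := by
    rw [hv, List.getD_eq_getElem _ _ hj]; exact List.getElem_mem _
  have hvbd : 1 ≤ v ∧ v < 1 + l.length := by
    have := (h.2.mem_iff).1 hvmem
    rwa [List.mem_range'_1] at this
  -- l as a map over range
  have hmap : l = (List.range l.length).map (fun i => l.getD i 0) := by
    apply List.ext_getElem (by simp)
    intro k h1 h2
    simp only [List.getElem_map, List.getElem_range]
    rw [List.getD_eq_getElem _ _ h1]
  have e1 : (l.filter q).length = ((List.range l.length).filter
      (fun i => decide (l.getD i 0 < v))).length := by
    conv_lhs => rw [hmap]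
    rw [List.filter_map, List.length_map]
    rfl
  have e2 : (l.filter q).length = v - 1 := by
    rw [(h.2.filter q).length_eq]
    have hsplit : List.range' 1 l.length
        = List.range' 1 (v - 1) ++ List.range' v (l.length + 1 - v) := by
      have hh := List.range'_append (s := 1) (m := v - 1) (n := l.length + 1 - v) (step := 1)
      rw [show 1 + 1 * (v - 1) = v by omega,
        show v - 1 + (l.length + 1 - v) = l.length by omega] at hh
      exact hh.symm
    rw [hsplit, List.filter_append]
    have f1 : List.filter q (List.range' 1 (v - 1)) = List.range' 1 (v - 1) := by
      rw [List.filter_eq_self]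
      intro a ha
      rw [List.mem_range'_1] at ha
      simp only [hq, decide_eq_true_eq]; omega
    have f2 : List.filter q (List.range' v (l.length + 1 - v)) = [] := by
      rw [List.filter_eq_nil_iff]
      intro a ha
      rw [List.mem_range'_1] at ha
      simp only [hq, decide_eq_true_eq]; omega
    rw [f1, f2]
    simp
  omega

lemma word_inj {l l' : List ℕ} (h : IsPermList l) (h' : IsPermList l') (hw : WP l) (hw' : WP l')
    (heq : omegaMap l = omegaMap l') : l = l' := by
  have hpos : 0 < l.length := List.length_pos_iff.2 h.1
  have hpos' : 0 < l'.length := List.length_pos_iff.2 h'.1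
  have hlen : l.length = l'.length := by
    have e1 := omegaMap_length l
    have e2 := omegaMap_length l'
    rw [heq] at e1
    omega
  apply List.ext_getElem hlen
  intro j hj hj'
  rw [← List.getD_eq_getElem l 0 hj, ← List.getD_eq_getElem l' 0 hj']
  rw [rank_formula h hj, rank_formula h' hj']
  congr 2
  rw [hlen]
  apply List.filter_congr
  intro i hi
  rw [List.mem_range] at hi
  by_cases hij : i = j
  · subst hij; simp
  · rw [decide_lt_eq h hw (by omega) (by omega) hij,
      decide_lt_eq h' hw' (by omega) (by omega) hij, heq]

/-! ### containment -/

lemma iff_flip {x y x' y' : ℕ} (hne : x ≠ y) (hne' : x' ≠ y') (h : y < x ↔ y' < x') :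
    (x < y ↔ x' < y') := by
  constructor <;> intro h5
  · rcases Nat.lt_trichotomy x' y' with h6 | h6 | h6
    · exact h6
    · exact absurd h6 hne'
    · exact absurd (h.mpr h6) (by omega)
  · rcases Nat.lt_trichotomy x y with h6 | h6 | h6
    · exact h6
    · exact absurd h6 hne
    · exact absurd (h.mp h6) (by omega)

lemma sub_getD {u l : List ℕ} (f : Fin u.length ↪o Fin l.length)
    (hf : ∀ i, u.get i = l.get (f i)) {a : ℕ} (ha : a < u.length) :
    u.getD a 0 = l.getD (f ⟨a, ha⟩).val 0 := by
  rw [List.getD_eq_getElem _ _ ha, List.getD_eq_getElem _ _ (f ⟨a, ha⟩).isLt]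
  simpa using hf ⟨a, ha⟩

lemma contains_to_subword {σ π : Permu} (hwπ : WP π.val)
    (hc : Contains σ π) : (omegaMap σ.val).Sublist (omegaMap π.val) := by
  obtain ⟨u, hsub, hlen, hiff⟩ := hc
  obtain ⟨f, hf⟩ := List.sublist_iff_exists_fin_orderEmbedding_get_eq.1 hsub
  have hσpos : 0 < σ.val.length := List.length_pos_iff.2 σ.2.1
  have hπpos : 0 < π.val.length := List.length_pos_iff.2 π.2.1
  have hωσ := omegaMap_length σ.val
  have hωπ := omegaMap_length π.val
  have h0u : 0 < u.length := by omega
  rw [List.sublist_iff_exists_fin_orderEmbedding_get_eq]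
  have hb1 : ∀ b : Fin (omegaMap σ.val).length, b.val + 1 < u.length := by
    intro b; have := b.isLt; omega
  have hge1 : ∀ b : Fin (omegaMap σ.val).length, 1 ≤ (f ⟨b.val + 1, hb1 b⟩).val := by
    intro b
    have h0 := f.strictMono (show (⟨0, h0u⟩ : Fin u.length) < ⟨b.val + 1, hb1 b⟩ by
      rw [Fin.mk_lt_mk]; omega)
    rw [Fin.lt_def] at h0
    omega
  have hF : ∀ b : Fin (omegaMap σ.val).length,
      (f ⟨b.val + 1, hb1 b⟩).val - 1 < (omegaMap π.val).length := by
    intro b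
    have h1 := (f ⟨b.val + 1, hb1 b⟩).isLt
    have h2 := hge1 b
    omega
  set F : Fin (omegaMap σ.val).length → Fin (omegaMap π.val).length :=
    fun b => ⟨(f ⟨b.val + 1, hb1 b⟩).val - 1, hF b⟩ with hFdef
  have hmono : StrictMono F := by
    intro b b' hbb
    rw [Fin.lt_def] at hbb
    have hm' := f.strictMono (show (⟨b.val + 1, hb1 b⟩ : Fin u.length) < ⟨b'.val + 1, hb1 b'⟩ by
      rw [Fin.mk_lt_mk]; omega)
    rw [Fin.lt_def] at hm'
    have g1 := hge1 b
    rw [Fin.lt_def]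
    show (f ⟨b.val + 1, hb1 b⟩).val - 1 < (f ⟨b'.val + 1, hb1 b'⟩).val - 1
    omega
  refine ⟨OrderEmbedding.ofStrictMono F hmono, ?_⟩
  intro b
  simp only [OrderEmbedding.coe_ofStrictMono]
  set j : ℕ := (f ⟨b.val + 1, hb1 b⟩).val with hjdef
  have hjlt : j < π.val.length := (f ⟨b.val + 1, hb1 b⟩).isLt
  have hbσ : b.val + 1 < σ.val.length := by have := b.isLt; omega
  have e1 : (omegaMap σ.val).get b = decide (σ.val.getD 0 0 < σ.val.getD (b.val + 1) 0) := by
    rw [List.get_eq_getElem, ← List.getD_eq_getElem _ false b.isLt]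
    have := omega_getD σ.2.1 (by omega : 1 ≤ b.val + 1) hbσ
    simpa using this
  have e2 : (omegaMap π.val).get (F b) = decide (π.val.getD 0 0 < π.val.getD j 0) := by
    rw [List.get_eq_getElem, ← List.getD_eq_getElem _ false (F b).isLt]
    show (omegaMap π.val).getD (j - 1) false = _
    exact omega_getD π.2.1 (hge1 b) hjlt
  rw [e1, e2, decide_eq_decide]
  have hlt0 : ((f ⟨0, h0u⟩).val : ℕ) < j := by
    have h0 := f.strictMono (show (⟨0, h0u⟩ : Fin u.length) < ⟨b.val + 1, hb1 b⟩ by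
      rw [Fin.mk_lt_mk]; omega)
    rw [Fin.lt_def] at h0
    exact h0
  calc σ.val.getD 0 0 < σ.val.getD (b.val + 1) 0
      ↔ u.getD 0 0 < u.getD (b.val + 1) 0 := (hiff 0 (b.val + 1) h0u (hb1 b)).symm
    _ ↔ π.val.getD (f ⟨0, h0u⟩).val 0 < π.val.getD j 0 := by
        rw [sub_getD f hf h0u, sub_getD f hf (hb1 b)]
    _ ↔ π.val.getD 0 0 < π.val.getD j 0 := hwπ _ _ hlt0 hjlt

lemma subword_to_contains {σ π : Permu} (hwσ : WP σ.val) (hwπ : WP π.val)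
    (hs : (omegaMap σ.val).Sublist (omegaMap π.val)) : Contains σ π := by
  obtain ⟨g, hg⟩ := List.sublist_iff_exists_fin_orderEmbedding_get_eq.1 hs
  have hσpos : 0 < σ.val.length := List.length_pos_iff.2 σ.2.1
  have hπpos : 0 < π.val.length := List.length_pos_iff.2 π.2.1
  have hωσ := omegaMap_length σ.val
  have hωπ := omegaMap_length π.val
  have hndσ := permlist_nodup σ.2
  have hndπ := permlist_nodup π.2
  set k := σ.val.length with hk
  set gN : ℕ → ℕ :=
    fun b => if h : b < (omegaMap σ.val).length then ((g ⟨b, h⟩ : Fin _) : ℕ) else 0 with hgN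
  have hgNval : ∀ b (h : b < (omegaMap σ.val).length), gN b = (g ⟨b, h⟩ : ℕ) := by
    intro b h; simp only [hgN]; rw [dif_pos h]
  have hgNlt : ∀ b, b < k - 1 → gN b < π.val.length - 1 := by
    intro b hb
    have hb' : b < (omegaMap σ.val).length := by omega
    rw [hgNval b hb']
    have := (g ⟨b, hb'⟩).isLt
    omega
  have hgNmono : ∀ b b', b < b' → b' < k - 1 → gN b < gN b' := by
    intro b b' hbb hb'
    have h1 : b < (omegaMap σ.val).length := by omega
    have h2 : b' < (omegaMap σ.val).length := by omega
    rw [hgNval b h1, hgNval b' h2]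
    have hgm := g.strictMono (show (⟨b, h1⟩ : Fin _) < ⟨b', h2⟩ by rw [Fin.mk_lt_mk]; omega)
    rw [Fin.lt_def] at hgm
    exact hgm
  have hword : ∀ b, b < k - 1 →
      (omegaMap σ.val).getD b false = (omegaMap π.val).getD (gN b) false := by
    intro b hb
    have h1 : b < (omegaMap σ.val).length := by omega
    rw [hgNval b h1, List.getD_eq_getElem _ _ h1,
      List.getD_eq_getElem _ _ (g ⟨b, h1⟩).isLt]
    simpa using hg ⟨b, h1⟩
  set pos : ℕ → ℕ := fun a => if a = 0 then 0 else gN (a - 1) + 1 with hpos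
  have hposlt : ∀ a, a < k → pos a < π.val.length := by
    intro a ha
    simp only [hpos]
    by_cases h0 : a = 0
    · rw [if_pos h0]; omega
    · rw [if_neg h0]
      have := hgNlt (a - 1) (by omega)
      omega
  have hposmono : ∀ a a', a < a' → a' < k → pos a < pos a' := by
    intro a a' haa ha'
    simp only [hpos]
    by_cases h0 : a = 0
    · rw [if_pos h0, if_neg (by omega)]; omega
    · rw [if_neg h0, if_neg (by omega)]
      have := hgNmono (a - 1) (a' - 1) (by omega) (by omega)
      omega
  set u : List ℕ := (List.range k).map (fun a => π.val.getD (pos a) 0) with hu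
  have hulen : u.length = k := by rw [hu]; simp
  have huget : ∀ a, a < k → u.getD a 0 = π.val.getD (pos a) 0 := by
    intro a ha
    rw [hu, List.getD_eq_getElem _ _ (by simpa using ha), List.getElem_map, List.getElem_range]
  have hsubl : u.Sublist π.val := by
    rw [List.sublist_iff_exists_fin_orderEmbedding_get_eq]
    have hmono : StrictMono (fun i : Fin u.length =>
        (⟨pos i.val, hposlt i.val (by rw [← hulen]; exact i.isLt)⟩ : Fin π.val.length)) := by
      intro i i' hii
      rw [Fin.lt_def] at hii
      rw [Fin.mk_lt_mk]
      exact hposmono _ _ hii (by rw [← hulen]; exact i'.isLt)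
    refine ⟨OrderEmbedding.ofStrictMono _ hmono, ?_⟩
    intro i
    have hik : i.val < k := by rw [← hulen]; exact i.isLt
    simp only [OrderEmbedding.coe_ofStrictMono]
    rw [List.get_eq_getElem, List.get_eq_getElem,
      ← List.getD_eq_getElem u 0 i.isLt, ← List.getD_eq_getElem π.val 0 (hposlt i.val hik)]
    exact huget i.val hik
  have core : ∀ a b, a < b → b < k →
      (u.getD a 0 < u.getD b 0 ↔ σ.val.getD a 0 < σ.val.getD b 0) := by
    intro a b hab hbk
    have hb1 : 1 ≤ b := by omega
    rw [huget a (by omega), huget b hbk]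
    have c1 : π.val.getD (pos a) 0 < π.val.getD (pos b) 0
        ↔ π.val.getD 0 0 < π.val.getD (pos b) 0 :=
      hwπ (pos a) (pos b) (hposmono a b hab hbk) (hposlt b hbk)
    have c2 : σ.val.getD a 0 < σ.val.getD b 0 ↔ σ.val.getD 0 0 < σ.val.getD b 0 :=
      hwσ a b hab (by omega)
    rw [c1, c2]
    have w1 : (omegaMap π.val).getD (pos b - 1) false
        = decide (π.val.getD 0 0 < π.val.getD (pos b) 0) :=
      omega_getD π.2.1 (by simp only [hpos]; rw [if_neg (by omega : ¬ b = 0)]; omega)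
        (hposlt b hbk)
    have w2 : (omegaMap σ.val).getD (b - 1) false
        = decide (σ.val.getD 0 0 < σ.val.getD b 0) :=
      omega_getD σ.2.1 hb1 (by omega)
    have hpb : pos b - 1 = gN (b - 1) := by
      simp only [hpos]; rw [if_neg (by omega : ¬ b = 0)]; omega
    rw [hpb] at w1
    have hch := hword (b - 1) (by omega)
    rw [w1, w2] at hch
    exact (decide_eq_decide.mp hch).symm
  refine ⟨u, hsubl, hulen, ?_⟩
  intro a b ha hb
  rw [hulen] at ha hb
  rcases Nat.lt_trichotomy a b with h | h | h
  · exact core a b h hb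
  · subst h; simp
  · refine iff_flip ?_ ?_ (core b a h ha)
    · rw [huget a ha, huget b hb]
      exact getD_ne hndπ (hposlt a ha) (hposlt b hb)
        (by have := hposmono b a h ha; omega)
    · exact getD_ne hndσ (by omega) (by omega) (by omega)


/-- ω is a bijection from the permutations of length n in
Av(132,312) onto the words of length n−1 over {a,b}, and containment
corresponds to the (not necessarily contiguous) subword order. -/
theorem statement_3 :
    (∀ n : ℕ, 1 ≤ n →
      Set.BijOn (fun π : Permu => omegaMap π.val)
        {π : Permu | π ∈ V ∧ π.val.length = n}
        {w : List Bool | w.length = n - 1}) ∧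
    (∀ σ π : Permu, σ ∈ V → π ∈ V →
      (Contains σ π ↔ (omegaMap σ.val).Sublist (omegaMap π.val))) := by
  constructor
  · intro n hn
    refine ⟨?_, ?_, ?_⟩
    · intro π hπ
      show (omegaMap π.val).length = n - 1
      rw [omegaMap_length, hπ.2]
    · intro σ hσ π hπ heq
      exact Subtype.ext (word_inj σ.2 π.2 (WP_of_mem_V hσ.1) (WP_of_mem_V hπ.1) heq)
    · intro w hw
      refine ⟨⟨toPerm w, toPerm_isPermList w⟩,
        ⟨mem_V_of_WP (toPerm_WP w), ?_⟩, omegaMap_toPerm w⟩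
      have := toPerm_length w
      have hwl : w.length = n - 1 := hw
      simp only [this, hwl]
      omega
  · intro σ π hσ hπ
    exact ⟨fun hc => contains_to_subword (WP_of_mem_V hπ) hc,
      fun hs => subword_to_contains (WP_of_mem_V hσ) (WP_of_mem_V hπ) hs⟩
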